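/- Let S>0 and let y₂:[½,1]→ℝ be C² with y₂'(½)=0, y₂'(1)=0, and (y₂'(t))²≤S for all t. Suppose y₂ satisfies y₂''(t) = h(t)²·((α − c₂T₂(t))e^{−2y₂(t)} − y₂'(t)K(t)) on [½,1], where h>0 is continuous, K(t)≤0 is continuous, α>0 is a constant, T₂∈C¹[½,1] with T₂'≤0, and c₂∈(α/sup T₂, α/inf T₂) so that α − c₂T₂ is increasing with α − c₂T₂(½)<0 and α − c₂T₂(1)>0. Then y₂'(t)≤0 for all t∈[½,1]. -/

import Mathlib

open Set

lemma myIntegral_hasDerivWithinAt_Icc {f : ℝ → ℝ} {a b : ℝ}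
    (hf : ContinuousOn f (Icc a b)) {t : ℝ} (ht : t ∈ Icc a b) :
    HasDerivWithinAt (fun u => ∫ x in a..u, f x) (f t) (Icc a b) t := by
  haveI := Fact.mk ht
  apply intervalIntegral.integral_hasDerivWithinAt_right
  · apply ContinuousOn.intervalIntegrable
    apply hf.mono
    rw [uIcc_of_le ht.1]
    exact Icc_subset_Icc le_rfl ht.2
  · exact hf.stronglyMeasurableAtFilter_nhdsWithin measurableSet_Icc t
  · exact hf t ht

/-- Sign-preservation: if y₂'' = h²((α − c₂T₂)e^{−2y₂} − y₂'K) with h > 0, K ≤ 0,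
α − c₂T₂ increasing, negative at ½ and positive at 1, y₂'(½) = y₂'(1) = 0 and
(y₂')² ≤ S, then y₂' ≤ 0 on [½,1]. -/
theorem stmt9 (S α c₂ : ℝ) (hS : 0 < S) (hα : 0 < α) (hc₂ : 0 < c₂)
    (h K T₂ T₂' y₂ y₂' : ℝ → ℝ)
    (hhcont : ContinuousOn h (Icc (1/2) 1))
    (hhpos : ∀ t ∈ Icc (1/2:ℝ) 1, 0 < h t)
    (hKcont : ContinuousOn K (Icc (1/2) 1))
    (hKnonpos : ∀ t ∈ Icc (1/2:ℝ) 1, K t ≤ 0)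
    (hT₂deriv : ∀ t ∈ Icc (1/2:ℝ) 1, HasDerivWithinAt T₂ (T₂' t) (Icc (1/2) 1) t)
    (hT₂'nonpos : ∀ t ∈ Icc (1/2:ℝ) 1, T₂' t ≤ 0)
    (hmono : MonotoneOn (fun t => α - c₂ * T₂ t) (Icc (1/2) 1))
    (hneg : α - c₂ * T₂ (1/2) < 0)
    (hpos : 0 < α - c₂ * T₂ 1)
    (hy₂deriv : ∀ t ∈ Icc (1/2:ℝ) 1, HasDerivWithinAt y₂ (y₂' t) (Icc (1/2) 1) t)
    (hy₂''deriv : ∀ t ∈ Icc (1/2:ℝ) 1, HasDerivWithinAt y₂'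
      ((h t) ^ 2 * ((α - c₂ * T₂ t) * Real.exp (-2 * y₂ t) - y₂' t * K t))
      (Icc (1/2) 1) t)
    (hy₂'half : y₂' (1/2) = 0) (hy₂'one : y₂' 1 = 0)
    (hbound : ∀ t ∈ Icc (1/2:ℝ) 1, (y₂' t) ^ 2 ≤ S) :
    ∀ t ∈ Icc (1/2:ℝ) 1, y₂' t ≤ 0 := by
  set I : Set ℝ := Icc (1/2 : ℝ) 1 with hIdef
  set q : ℝ → ℝ := fun t => ∫ s in (1/2 : ℝ)..t, (h s) ^ 2 * K s with hqdef
  set F : ℝ → ℝ := fun t => Real.exp (q t) * y₂' t with hFdef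
  set F' : ℝ → ℝ := fun t =>
    Real.exp (q t) * ((h t) ^ 2 * (α - c₂ * T₂ t) * Real.exp (-2 * y₂ t)) with hF'def
  have hqcont : ContinuousOn (fun s => (h s) ^ 2 * K s) I :=
    (hhcont.pow 2).mul hKcont
  have hqderiv : ∀ t ∈ I, HasDerivWithinAt q ((h t) ^ 2 * K t) I t := fun t ht =>
    myIntegral_hasDerivWithinAt_Icc hqcont ht
  have hFderiv : ∀ t ∈ I, HasDerivWithinAt F (F' t) I t := by
    intro t ht
    have := ((hqderiv t ht).exp).fun_mul (hy₂''deriv t ht)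
    refine this.congr_deriv ?_
    simp only [hF'def]
    ring
  have hFcont : ContinuousOn F I := fun t ht => (hFderiv t ht).continuousWithinAt
  have hF'sign : ∀ t ∈ I, α - c₂ * T₂ t ≤ 0 → F' t ≤ 0 := by
    intro t ht hg
    have e1 := Real.exp_pos (q t)
    have e2 := Real.exp_pos (-2 * y₂ t)
    have hh := sq_nonneg (h t)
    simp only [hF'def]
    nlinarith [mul_nonneg (mul_nonneg e1.le hh) e2.le]
  have hF'sign' : ∀ t ∈ I, 0 ≤ α - c₂ * T₂ t → 0 ≤ F' t := by
    intro t ht hg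
    have e1 := Real.exp_pos (q t)
    have e2 := Real.exp_pos (-2 * y₂ t)
    have hh := sq_nonneg (h t)
    simp only [hF'def]
    nlinarith [mul_nonneg (mul_nonneg e1.le hh) e2.le]
  have hFhalf : F (1/2) = 0 := by
    show Real.exp (q (1/2)) * y₂' (1/2) = 0
    rw [hy₂'half, mul_zero]
  have hFone : F 1 = 0 := by
    show Real.exp (q 1) * y₂' 1 = 0
    rw [hy₂'one, mul_zero]
  have key : ∀ t ∈ I, F t ≤ 0 := by
    intro t ht
    rcases le_or_gt (α - c₂ * T₂ t) 0 with hg | hg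
    · -- F antitone on [1/2, t], so F t ≤ F (1/2) = 0
      have hsub : Icc (1/2 : ℝ) t ⊆ I := Icc_subset_Icc le_rfl ht.2
      have hanti : AntitoneOn F (Icc (1/2 : ℝ) t) := by
        apply antitoneOn_of_hasDerivWithinAt_nonpos (convex_Icc _ _)
          (hFcont.mono hsub) (f' := F')
        · intro x hx
          rw [interior_Icc] at hx
          have hxI : x ∈ I := hsub (Ioo_subset_Icc_self hx)
          exact (hFderiv x hxI).mono ((interior_subset (s := Icc _ _)).trans hsub)
        · intro x hx
          rw [interior_Icc] at hx
          have hxI : x ∈ I := hsub (Ioo_subset_Icc_self hx)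
          exact hF'sign x hxI (le_trans (hmono hxI ht hx.2.le) hg)
      have := hanti (left_mem_Icc.2 ht.1) (right_mem_Icc.2 ht.1) ht.1
      rw [hFhalf] at this
      exact this
    · -- F monotone on [t, 1], so F t ≤ F 1 = 0
      have hsub : Icc t 1 ⊆ I := Icc_subset_Icc ht.1 le_rfl
      have hmon : MonotoneOn F (Icc t 1) := by
        apply monotoneOn_of_hasDerivWithinAt_nonneg (convex_Icc _ _)
          (hFcont.mono hsub) (f' := F')
        · intro x hx
          rw [interior_Icc] at hx
          have hxI : x ∈ I := hsub (Ioo_subset_Icc_self hx)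
          exact (hFderiv x hxI).mono ((interior_subset (s := Icc _ _)).trans hsub)
        · intro x hx
          rw [interior_Icc] at hx
          have hxI : x ∈ I := hsub (Ioo_subset_Icc_self hx)
          exact hF'sign' x hxI (le_trans hg.le (hmono ht hxI hx.1.le))
      have := hmon (left_mem_Icc.2 ht.2) (right_mem_Icc.2 ht.2) ht.2
      rw [hFone] at this
      exact this
  intro t ht
  have hF := key t ht
  have e1 := Real.exp_pos (q t)
  simp only [hFdef] at hF
  exact le_of_mul_le_mul_left (by rw [mul_zero]; exact hF) e1
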